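/- arXiv:2003.11298 — 2 statements merged into one kernel-verified Lean document; each statement's English description precedes it below -/
import Mathlib

section
/- Let γ_1,…,γ_n be the edge vectors along the boundary of a convex polygon in ℝ² with n vertices, taken in cyclic order. Then σ(γ_1,…,γ_n,ε) = 1 with respect to the preferred orientation ε of the sequence. If moreover n is even, then the sequence (γ_1,−γ_2,γ_3,…,γ_{n−1},−γ_n) is locally convex with preferred orientation −ε, and σ(γ_1,−γ_2,…,γ_{n−1},−γ_n,−ε) = (n−2)/2. -/
open Classical

namespace GKMPaper

/-- `ℤ^m`, the weight lattice. -/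
abbrev Zm (m : ℕ) := Fin m → ℤ

/-- The relation identifying a vector with its negative. -/
def pmRel (m : ℕ) (a b : Zm m) : Prop := a = b ∨ a = -b

theorem pmRel_equiv (m : ℕ) : Equivalence (pmRel m) := by
  constructor
  · intro a; exact Or.inl rfl
  · intro a b hab
    rcases hab with hh | hh
    · exact Or.inl hh.symm
    · exact Or.inr (by rw [hh, neg_neg])
  · intro a b c h1 h2
    rcases h1 with h1 | h1 <;> rcases h2 with h2 | h2
    · exact Or.inl (h1.trans h2)
    · exact Or.inr (h1.trans h2)
    · exact Or.inr (by rw [h1, h2])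
    · exact Or.inl (by rw [h1, h2, neg_neg])

def pmSetoid (m : ℕ) : Setoid (Zm m) := ⟨pmRel m, pmRel_equiv m⟩

/-- `ℤ^m / ±1`. -/
def ZmPM (m : ℕ) := Quotient (pmSetoid m)

/-- The projection `ℤ^m → ℤ^m/±1`. -/
def pm {m : ℕ} (a : Zm m) : ZmPM m := Quotient.mk (pmSetoid m) a

/-- Linear independence over `ℤ`. -/
def Indep {m : ℕ} (a b : Zm m) : Prop :=
  ∀ c d : ℤ, c • a + d • b = 0 → c = 0 ∧ d = 0

/-- An abstract graph with finite vertex and edge sets, each edge occurring with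
both orientations, and no loops. -/
structure OrGraph : Type 1 where
  V : Type
  E : Type
  fV : Fintype V
  fE : Fintype E
  dV : DecidableEq V
  dE : DecidableEq E
  src : E → V
  dst : E → V
  rev : E → E
  rev_rev : ∀ e, rev (rev e) = e
  rev_ne : ∀ e, rev e ≠ e
  src_rev : ∀ e, src (rev e) = dst e
  no_loop : ∀ e, src e ≠ dst e

attribute [instance] OrGraph.fV OrGraph.fE OrGraph.dV OrGraph.dE

/-- A connection on a graph. -/
structure Connection (G : OrGraph) where
  t : G.E → G.E → G.E
  src_t : ∀ e f, G.src f = G.src e → G.src (t e f) = G.dst e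
  t_self : ∀ e, t e e = G.rev e
  t_inv : ∀ e f, G.src f = G.src e → t (G.rev e) (t e f) = f

/-- `k`-valence. -/
def OrGraph.Regular (G : OrGraph) (k : ℕ) : Prop :=
  ∀ v : G.V, Fintype.card {e : G.E // G.src e = v} = k

def OrGraph.Adj (G : OrGraph) (v w : G.V) : Prop :=
  ∃ e, G.src e = v ∧ G.dst e = w

def OrGraph.IsConn (G : OrGraph) : Prop :=
  ∀ v w : G.V, Relation.ReflTransGen G.Adj v w

/-- Compatibility of a connection with an unsigned axial function. -/
def UnsignedCompat {m : ℕ} (G : OrGraph) (α : G.E → ZmPM m) (C : Connection G) : Prop :=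
  (∀ e f : G.E, G.src f = G.src e → e ≠ f →
      ∀ a b : Zm m, pm a = α e → pm b = α f → Indep a b) ∧
  (∀ e f : G.E, G.src f = G.src e →
      ∃ (a g : Zm m) (c : ℤ), pm a = α f ∧ pm g = α e ∧ α (C.t e f) = pm (a + c • g)) ∧
  (∀ e : G.E, α (G.rev e) = α e)

/-- `(G, α)` is an (unsigned) abstract GKM graph of valence `k` with labels in `ℤ^m/±1`. -/
def IsGKM {m : ℕ} (G : OrGraph) (k : ℕ) (α : G.E → ZmPM m) : Prop :=
  G.Regular k ∧ G.IsConn ∧ ∃ C : Connection G, UnsignedCompat G α C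

/-- Compatibility of a connection with a signed axial function. -/
def SignedCompat {m : ℕ} (G : OrGraph) (α : G.E → Zm m) (C : Connection G) : Prop :=
  (∀ e f : G.E, G.src f = G.src e → e ≠ f → Indep (α e) (α f)) ∧
  (∀ e f : G.E, G.src f = G.src e → ∃ c : ℤ, α (C.t e f) = α f + c • α e) ∧
  (∀ e : G.E, α (G.rev e) = - α e)

/-- `(G, α)` is a signed abstract GKM graph of valence `k` with labels in `ℤ^m`. -/
def IsSignedGKM {m : ℕ} (G : OrGraph) (k : ℕ) (α : G.E → Zm m) : Prop :=
  G.Regular k ∧ G.IsConn ∧ ∃ C : Connection G, SignedCompat G α C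

/-- Effectivity of an unsigned GKM graph: at every vertex, the labels of the
outgoing edges lift to a generating set of `ℤ^m`. -/
def Effective {m : ℕ} (G : OrGraph) (α : G.E → ZmPM m) : Prop :=
  ∀ v : G.V, ∃ lift : {e : G.E // G.src e = v} → Zm m,
    (∀ e, pm (lift e) = α e.1) ∧ Submodule.span ℤ (Set.range lift) = ⊤

def SignedEffective {m : ℕ} (G : OrGraph) (α : G.E → Zm m) : Prop :=
  ∀ v : G.V,
    Submodule.span ℤ (Set.range (fun e : {e : G.E // G.src e = v} => α e.1)) = ⊤

/-- A graph fibration: a morphism sending vertices to vertices and horizontal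
edges to edges, bijectively from the horizontal edges at `p` to the edges at `π(p)`. -/
structure GraphFib (G B : OrGraph) where
  onV : G.V → B.V
  onE : G.E → B.E
  src_onE : ∀ e, onV (G.src e) ≠ onV (G.dst e) → B.src (onE e) = onV (G.src e)
  dst_onE : ∀ e, onV (G.src e) ≠ onV (G.dst e) → B.dst (onE e) = onV (G.dst e)
  rev_onE : ∀ e, onV (G.src e) ≠ onV (G.dst e) → onE (G.rev e) = B.rev (onE e)

def GraphFib.Vertical {G B : OrGraph} (π : GraphFib G B) (e : G.E) : Prop :=
  π.onV (G.src e) = π.onV (G.dst e)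

def GraphFib.IsFib {G B : OrGraph} (π : GraphFib G B) : Prop :=
  ∀ p : G.V, Function.Bijective
    (fun e : {e : G.E // G.src e = p ∧ ¬ π.Vertical e} =>
      (⟨π.onE e.1, by rw [π.src_onE e.1 e.2.2, e.2.1]⟩ : {f : B.E // B.src f = π.onV p}))

/-- The extra conditions for a (unsigned) GKM fibration, w.r.t. connections `C`, `CB`. -/
def GKMFibCompat {m : ℕ} {G B : OrGraph} (αΓ : G.E → ZmPM m) (αB : B.E → ZmPM m)
    (π : GraphFib G B) (C : Connection G) (CB : Connection B) : Prop :=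
  (∀ e, ¬ π.Vertical e → αΓ e = αB (π.onE e)) ∧
  (∀ e f, G.src f = G.src e → π.Vertical f → π.Vertical (C.t e f)) ∧
  (∀ e f, G.src f = G.src e → ¬ π.Vertical e → ¬ π.Vertical f →
      ¬ π.Vertical (C.t e f) ∧ π.onE (C.t e f) = CB.t (π.onE e) (π.onE f))

/-- `π` is a GKM fibration of unsigned GKM graphs. -/
def IsGKMFib {m : ℕ} {G B : OrGraph} (αΓ : G.E → ZmPM m) (αB : B.E → ZmPM m)
    (π : GraphFib G B) : Prop :=
  π.IsFib ∧ ∃ (C : Connection G) (CB : Connection B),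
    UnsignedCompat G αΓ C ∧ UnsignedCompat B αB CB ∧ GKMFibCompat αΓ αB π C CB

def SignedGKMFibCompat {m : ℕ} {G B : OrGraph} (sΓ : G.E → Zm m) (sB : B.E → Zm m)
    (π : GraphFib G B) (C : Connection G) (CB : Connection B) : Prop :=
  (∀ e, ¬ π.Vertical e → sΓ e = sB (π.onE e)) ∧
  (∀ e f, G.src f = G.src e → π.Vertical f → π.Vertical (C.t e f)) ∧
  (∀ e f, G.src f = G.src e → ¬ π.Vertical e → ¬ π.Vertical f →
      ¬ π.Vertical (C.t e f) ∧ π.onE (C.t e f) = CB.t (π.onE e) (π.onE f))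

/-- `π` is a signed GKM fibration of signed GKM graphs. -/
def IsSignedGKMFib {m : ℕ} {G B : OrGraph} (sΓ : G.E → Zm m) (sB : B.E → Zm m)
    (π : GraphFib G B) : Prop :=
  π.IsFib ∧ ∃ (C : Connection G) (CB : Connection B),
    SignedCompat G sΓ C ∧ SignedCompat B sB CB ∧ SignedGKMFibCompat sΓ sB π C CB

/-- `(π, ft)` is a fiberwise signed fibration: `ft` is a lift of `αΓ` on the
vertical edges, satisfying the congruence condition w.r.t. suitable connections. -/
def IsFiberwiseSigned {m : ℕ} {G B : OrGraph} (αΓ : G.E → ZmPM m) (αB : B.E → ZmPM m)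
    (π : GraphFib G B) (ft : G.E → Zm m) : Prop :=
  π.IsFib ∧
  (∀ e, π.Vertical e → pm (ft e) = αΓ e) ∧
  (∀ e, π.Vertical e → ft (G.rev e) = - ft e) ∧
  ∃ (C : Connection G) (CB : Connection B),
    UnsignedCompat G αΓ C ∧ UnsignedCompat B αB CB ∧ GKMFibCompat αΓ αB π C CB ∧
    ∀ e f, G.src f = G.src e → π.Vertical f →
      ∃ (g : Zm m) (c : ℤ), pm g = αΓ e ∧ ft (C.t e f) = ft f + c • g

/-- Isomorphism of unsigned GKM graphs. -/
structure GKMIso {m : ℕ} (G : OrGraph) (α : G.E → ZmPM m)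
    (G' : OrGraph) (α' : G'.E → ZmPM m) : Type where
  fV : G.V ≃ G'.V
  fE : G.E ≃ G'.E
  φ : Zm m ≃ₗ[ℤ] Zm m
  src_comm : ∀ e, G'.src (fE e) = fV (G.src e)
  dst_comm : ∀ e, G'.dst (fE e) = fV (G.dst e)
  rev_comm : ∀ e, fE (G.rev e) = G'.rev (fE e)
  lab : ∀ (e : G.E) (a : Zm m), pm a = α e → α' (fE e) = pm (φ a)

/-- Isomorphism of signed GKM graphs. -/
structure SignedGKMIso {m : ℕ} (G : OrGraph) (α : G.E → Zm m)
    (G' : OrGraph) (α' : G'.E → Zm m) : Type where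
  fV : G.V ≃ G'.V
  fE : G.E ≃ G'.E
  φ : Zm m ≃ₗ[ℤ] Zm m
  src_comm : ∀ e, G'.src (fE e) = fV (G.src e)
  dst_comm : ∀ e, G'.dst (fE e) = fV (G.dst e)
  rev_comm : ∀ e, fE (G.rev e) = G'.rev (fE e)
  lab : ∀ e, α' (fE e) = φ (α e)

/-- Equivalence of fiberwise signed fibrations over the same base (identity on `ℤ^m`). -/
structure FSFEquiv {m : ℕ} {G B G' : OrGraph}
    (αΓ : G.E → ZmPM m) (π : GraphFib G B) (ft : G.E → Zm m)
    (αΓ' : G'.E → ZmPM m) (π' : GraphFib G' B) (ft' : G'.E → Zm m) : Type where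
  fV : G.V ≃ G'.V
  fE : G.E ≃ G'.E
  src_comm : ∀ e, G'.src (fE e) = fV (G.src e)
  dst_comm : ∀ e, G'.dst (fE e) = fV (G.dst e)
  rev_comm : ∀ e, fE (G.rev e) = G'.rev (fE e)
  lab : ∀ e, αΓ' (fE e) = αΓ e
  baseV : ∀ p, π'.onV (fV p) = π.onV p
  baseE : ∀ e, ¬ π.Vertical e → π'.onE (fE e) = π.onE e
  fiblab : ∀ e, π.Vertical e → ft' (fE e) = ft e

/-- Equivalence of signed GKM fibrations over the same base (identity on `ℤ^m`). -/
structure SFEquiv {m : ℕ} {G B G' : OrGraph}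
    (sΓ : G.E → Zm m) (π : GraphFib G B)
    (sΓ' : G'.E → Zm m) (π' : GraphFib G' B) : Type where
  fV : G.V ≃ G'.V
  fE : G.E ≃ G'.E
  src_comm : ∀ e, G'.src (fE e) = fV (G.src e)
  dst_comm : ∀ e, G'.dst (fE e) = fV (G.dst e)
  rev_comm : ∀ e, fE (G.rev e) = G'.rev (fE e)
  lab : ∀ e, sΓ' (fE e) = sΓ e
  baseV : ∀ p, π'.onV (fV p) = π.onV p
  baseE : ∀ e, ¬ π.Vertical e → π'.onE (fE e) = π.onE e

/-- Realizing `ℤ²` inside `ℝ² = ℂ`. -/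
noncomputable def toC (a : Zm 2) : ℂ := (a 0 : ℝ) + (a 1 : ℝ) * Complex.I

def cross (a b : ℂ) : ℝ := a.re * b.im - a.im * b.re

/-- A vertex of a signed GKM graph with labels in `ℤ²` is interior if the cone
spanned by the labels of the edges emanating from it is all of `ℝ²`. -/
def InteriorVtx (G : OrGraph) (α : G.E → Zm 2) (p : G.V) : Prop :=
  ∀ x : ℂ, ∃ c : G.E → ℝ, (∀ e, 0 ≤ c e) ∧
    x = ∑ e ∈ Finset.univ.filter (fun e : G.E => G.src e = p), c e • toC (α e)

/-- The angle from `w` to `w'`, represented in `[0, 2π)` if `ε = true`,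
and in `(-2π, 0]` if `ε = false`. -/
noncomputable def angTo (ε : Bool) (w w' : ℂ) : ℝ :=
  if ε then (if (w' / w).arg < 0 then (w' / w).arg + 2 * Real.pi else (w' / w).arg)
  else (if 0 < (w' / w).arg then (w' / w).arg - 2 * Real.pi else (w' / w).arg)

/-- The winding number of a cyclic sequence of vectors w.r.t. the orientation `ε`. -/
noncomputable def winding {nn : ℕ} [NeZero nn] (w : ZMod nn → ℂ) (ε : Bool) : ℝ :=
  (1 / (2 * Real.pi)) * ∑ i : ZMod nn, |angTo ε (w i) (w (i + 1))|

def LocallyConvex {nn : ℕ} (w : ZMod nn → ℂ) : Prop :=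
  (∀ i, angTo true (w i) (w (i + 1)) ∈ Set.Ioo 0 Real.pi) ∨
  (∀ i, angTo false (w i) (w (i + 1)) ∈ Set.Ioo (-Real.pi) 0)

/-- `ε` is the preferred orientation of the locally convex sequence `w`. -/
def Preferred {nn : ℕ} (w : ZMod nn → ℂ) (ε : Bool) : Prop :=
  (ε = true ∧ ∀ i, angTo true (w i) (w (i + 1)) ∈ Set.Ioo 0 Real.pi) ∨
  (ε = false ∧ ∀ i, angTo false (w i) (w (i + 1)) ∈ Set.Ioo (-Real.pi) 0)

/-- `P` lists the vertices of a strictly convex polygon in cyclic order. -/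
def ConvexCyclic {nn : ℕ} (P : ZMod nn → ℂ) : Prop :=
  (∀ i j, j ≠ i → j ≠ i + 1 → 0 < cross (P (i + 1) - P i) (P j - P i)) ∨
  (∀ i j, j ≠ i → j ≠ i + 1 → cross (P (i + 1) - P i) (P j - P i) < 0)

def SubAdj (G : OrGraph) (S : Set G.E) (v w : G.V) : Prop :=
  ∃ e ∈ S, G.src e = v ∧ G.dst e = w

/-- `S` is (the edge set of) a connected `2`-valent signed GKM subgraph of `(G, α)`. -/
def IsSigned2ValentSub (G : OrGraph) (α : G.E → Zm 2) (S : Set G.E) : Prop :=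
  S.Nonempty ∧
  (∀ e ∈ S, G.rev e ∈ S) ∧
  (∀ v : G.V, (∃ e ∈ S, G.src e = v) → Nat.card {e : G.E // e ∈ S ∧ G.src e = v} = 2) ∧
  (∀ v w : G.V, (∃ e ∈ S, G.src e = v) → (∃ e ∈ S, G.src e = w) →
      Relation.ReflTransGen (SubAdj G S) v w) ∧
  ∃ T : G.E → G.E → G.E,
    (∀ e f, e ∈ S → f ∈ S → G.src f = G.src e → T e f ∈ S ∧ G.src (T e f) = G.dst e) ∧
    (∀ e, e ∈ S → T e e = G.rev e) ∧
    (∀ e f, e ∈ S → f ∈ S → G.src f = G.src e → T (G.rev e) (T e f) = f) ∧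
    (∀ e f, e ∈ S → f ∈ S → G.src f = G.src e → ∃ c : ℤ, α (T e f) = α f + c • α e)

/-- A `2`-valent signed GKM subgraph of polytope type: it is a cycle realized by the
boundary edges of a simple convex `2`-polytope, with labels representing the slopes. -/
def IsPolytopeTypeSub (G : OrGraph) (α : G.E → Zm 2) (S : Set G.E) : Prop :=
  IsSigned2ValentSub G α S ∧
  ∃ np : ℕ, 3 ≤ np ∧
    ∃ (cyc : ZMod np → G.E) (P : ZMod np → ℂ) (t : ZMod np → ℝ),
      (∀ i, cyc i ∈ S) ∧
      (∀ ed ∈ S, ∃ i, ed = cyc i ∨ ed = G.rev (cyc i)) ∧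
      (∀ i, G.dst (cyc i) = G.src (cyc (i + 1))) ∧
      ConvexCyclic P ∧
      (∀ i, 0 < t i) ∧
      (∀ i, P (i + 1) - P i = t i • toC (α (cyc i)))

/-- A fibration over an `n`-gon base is of product type if the lifts of a path
once around the base are closed. -/
def ProductType {G B : OrGraph} (π : GraphFib G B) {nn : ℕ} (eB : ZMod nn → B.E) : Prop :=
  ∃ l : ZMod nn → G.E,
    ∀ i, ¬ π.Vertical (l i) ∧ π.onE (l i) = eB i ∧ G.dst (l i) = G.src (l (i + 1))

/-- `ℤ`-indexed `n`-gon data for a `2`-valent base graph. -/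
structure ZGonData (B : OrGraph) (n : ℕ) where
  v : ℤ → B.V
  eB : ℤ → B.E
  v_per : ∀ i, v (i + n) = v i
  e_per : ∀ i, eB (i + n) = eB i
  src_e : ∀ i, B.src (eB i) = v i
  dst_e : ∀ i, B.dst (eB i) = v (i + 1)
  v_inj : ∀ i j : ℤ, 0 ≤ i → i < n → 0 ≤ j → j < n → v i = v j → i = j
  v_surj : ∀ w : B.V, ∃ i : ℤ, v i = w
  e_cover : ∀ ed : B.E, ∃ i : ℤ, ed = eB i ∨ ed = B.rev (eB i)

/-- A choice of sign representatives `γ_i` of the base labels with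
`γ_i ≡ -γ_{i+2} (mod γ_{i+1})` for all `i ∈ ℤ`. -/
structure GammaData {B : OrGraph} {n : ℕ} (αB : B.E → ZmPM 2) (D : ZGonData B n) where
  γ : ℤ → Zm 2
  lift : ∀ i, pm (γ i) = αB (D.eB i)
  cong : ∀ i, ∃ c : ℤ, γ i + γ (i + 2) = c • γ (i + 1)

/-- A fiberwise signed `3`-valent GKM fibration over `(B, αB)`. -/
structure FSFOver (B : OrGraph) (αB : B.E → ZmPM 2) : Type 1 where
  G : OrGraph
  αΓ : G.E → ZmPM 2
  hΓ : IsGKM G 3 αΓ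
  π : GraphFib G B
  ft : G.E → Zm 2
  isfs : IsFiberwiseSigned αΓ αB π ft

def FSFOver.Equiv {B : OrGraph} {αB : B.E → ZmPM 2} (F F' : FSFOver B αB) : Prop :=
  Nonempty (FSFEquiv F.αΓ F.π F.ft F'.αΓ F'.π F'.ft)

/-- A signed `3`-valent GKM fibration over the signed graph `(B, sB)`. -/
structure SFOver (B : OrGraph) (sB : B.E → Zm 2) : Type 1 where
  G : OrGraph
  sΓ : G.E → Zm 2
  hΓ : IsSignedGKM G 3 sΓ
  π : GraphFib G B
  issf : IsSignedGKMFib sΓ sB π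

def SFOver.Equiv {B : OrGraph} {sB : B.E → Zm 2} (F F' : SFOver B sB) : Prop :=
  Nonempty (SFEquiv F.sΓ F.π F'.sΓ F'.π)

/-- The fibration `F` realizes the classification datum `([k], η)` w.r.t. the fixed data. -/
def RealizesFS {B : OrGraph} {αB : B.E → ZmPM 2} {n : ℕ} (D : ZGonData B n)
    (Γd : GammaData αB D) (F : FSFOver B αB) (k : ZMod n → ℤ) (η : Bool) : Prop :=
  (η = false ↔ ProductType F.π (fun i : ZMod n => D.eB i.val)) ∧
  ∃ (gE : ℤ → F.G.E) (αf : ℤ → Zm 2) (kk : ℤ → ℤ),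
    (∀ i, F.π.Vertical (gE i)) ∧
    (∀ i, F.π.onV (F.G.src (gE i)) = D.v i) ∧
    (∀ i, gE (i + n) = gE i ∨ gE (i + n) = F.G.rev (gE i)) ∧
    (∀ i, pm (αf i) = F.αΓ (gE i)) ∧
    (∀ i, ∃ c : ℤ, αf (i + 1) = αf i + c • Γd.γ i) ∧
    (∀ i, αf i = kk i • Γd.γ (i - 1) - kk (i - 1) • Γd.γ i) ∧
    (∀ i, kk i ≠ 0) ∧
    (∀ i : ZMod n, k i = kk i.val)

/-- The signed fibration `F` realizes the classification datum `([k], η)`. -/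
def RealizesS {B : OrGraph} (sB : B.E → Zm 2) {αB : B.E → ZmPM 2} {n : ℕ}
    (D : ZGonData B n) (Γd : GammaData αB D) (F : SFOver B sB)
    (k : ZMod n → ℤ) (η : Bool) : Prop :=
  (η = false ↔ ProductType F.π (fun i : ZMod n => D.eB i.val)) ∧
  ∃ (gE : ℤ → F.G.E) (αf : ℤ → Zm 2) (kk : ℤ → ℤ),
    (∀ i, F.π.Vertical (gE i)) ∧
    (∀ i, F.π.onV (F.G.src (gE i)) = D.v i) ∧
    (∀ i, gE (i + n) = gE i ∨ gE (i + n) = F.G.rev (gE i)) ∧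
    (∀ i, pm (αf i) = pm (F.sΓ (gE i))) ∧
    (∀ i, ∃ c : ℤ, αf (i + 1) = αf i + c • Γd.γ i) ∧
    (∀ i, αf i = kk i • Γd.γ (i - 1) - kk (i - 1) • Γd.γ i) ∧
    (∀ i, kk i ≠ 0) ∧
    (∀ i : ZMod n, k i = kk i.val)

def KRel (n : ℕ) (a b : {k : ZMod n → ℤ // ∀ i, k i ≠ 0}) : Prop :=
  a.1 = b.1 ∨ a.1 = - b.1

/-- `((ℤ∖{0})^n)/±1`. -/
def KClass (n : ℕ) := Quot (KRel n)

/-- The Section 7 setting: a signed GKM fibration of twisted type of a `3`-valent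
signed GKM graph `Γ` over `B`, the boundary of a 2-dimensional Delzant polytope with
`n` vertices, with `Γ` having `n-1` interior vertices; with the basic edges `f i`, `h i`
over `e i` and the fiber edges `g i`. -/
structure Section7 : Type 1 where
  n : ℕ
  hn : 3 ≤ n
  G : OrGraph
  B : OrGraph
  aG : G.E → Zm 2
  aB : B.E → Zm 2
  hG : IsSignedGKM G 3 aG
  hB : IsSignedGKM B 2 aB
  π : GraphFib G B
  hfib : IsSignedGKMFib aG aB π
  v : ZMod n → B.V
  e : ZMod n → B.E
  v_bij : Function.Bijective v
  src_e : ∀ i, B.src (e i) = v i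
  dst_e : ∀ i, B.dst (e i) = v (i + 1)
  e_cover : ∀ ed : B.E, ∃ i, ed = e i ∨ ed = B.rev (e i)
  P : ZMod n → ℂ
  tl : ZMod n → ℝ
  tl_pos : ∀ i, 0 < tl i
  polygon : ConvexCyclic P
  slope : ∀ i, P (i + 1) - P i = tl i • toC (aB (e i))
  delzant : ∀ i, (aB (e (i - 1)) 0) * (aB (e i) 1) - (aB (e (i - 1)) 1) * (aB (e i) 0) = 1 ∨
                 (aB (e (i - 1)) 0) * (aB (e i) 1) - (aB (e (i - 1)) 1) * (aB (e i) 0) = -1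
  f : ZMod n → G.E
  h : ZMod n → G.E
  g : ZMod n → G.E
  f_horiz : ∀ i, ¬ π.Vertical (f i)
  h_horiz : ∀ i, ¬ π.Vertical (h i)
  f_over : ∀ i, π.onE (f i) = e i
  h_over : ∀ i, π.onE (h i) = e i
  f_ne_h : ∀ i, f i ≠ h i
  g_vert : ∀ i, π.Vertical (g i)
  g_src : ∀ i, G.src (g i) = G.src (f i)
  g_dst : ∀ i, G.dst (g i) = G.src (h i)
  chain_f : ∀ i : ZMod n, i + 1 ≠ 0 → G.dst (f i) = G.src (f (i + 1))
  chain_h : ∀ i : ZMod n, i + 1 ≠ 0 → G.dst (h i) = G.src (h (i + 1))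
  twist_f : G.dst (f (-1)) = G.src (h 0)
  twist_h : G.dst (h (-1)) = G.src (f 0)
  k : ZMod n → ℤ
  k_ne : ∀ i, k i ≠ 0
  fiberweight : ∀ i, aG (g i) =
    k i • aB (e (i - 1)) - (if i = 0 then - k (i - 1) else k (i - 1)) • aB (e i)
  interior_count : Nat.card {p : G.V // InteriorVtx G aG p} = n - 1

/-- The type II signed structure: the signs of the labels of every second pair
of basic edges are reversed. -/
noncomputable def Section7.alphaII (S : Section7) : S.G.E → Zm 2 :=
  fun ed =>
    if ∃ i : ZMod S.n, Odd i.val ∧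
        (ed = S.f i ∨ ed = S.h i ∨ ed = S.G.rev (S.f i) ∨ ed = S.G.rev (S.h i))
    then - S.aG ed else S.aG ed


section Statement14Aux
set_option linter.dupNamespace false


lemma nowrap (u p q a : ℂ) (h1 : 0 < cross p u) (h2 : 0 ≤ cross u q)
    (h3 : 0 < cross p q) (h4 : 0 < cross p a) (h5 : 0 < cross q (a - p))
    (h6 : 0 < cross u (p - a)) : False := by
  have key : cross p u * cross q (a - p) + cross u q * cross p a
      + cross p q * cross u (p - a) = 0 := by simp [cross]; ring
  nlinarith [mul_pos h1 h5, mul_nonneg h2 h4.le, mul_pos h3 h6]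

lemma angTo_true_def (w w' : ℂ) : angTo true w w' =
    if (w' / w).arg < 0 then (w' / w).arg + 2 * Real.pi else (w' / w).arg := by
  simp [angTo]

lemma angTo_false_def (w w' : ℂ) : angTo false w w' =
    if 0 < (w' / w).arg then (w' / w).arg - 2 * Real.pi else (w' / w).arg := by
  simp [angTo]

lemma angTo_mem_Ico (w w' : ℂ) : angTo true w w' ∈ Set.Ico 0 (2 * Real.pi) := by
  rw [angTo_true_def]
  have h1 := Complex.neg_pi_lt_arg (w' / w)
  have h2 := Complex.arg_le_pi (w' / w)
  have hπ := Real.pi_pos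
  split_ifs with h <;> constructor <;> linarith

lemma angTo_coe (w w' : ℂ) :
    (angTo true w w' : Real.Angle) = ((w' / w).arg : Real.Angle) := by
  rw [angTo_true_def]
  split_ifs with h
  · rw [Real.Angle.coe_add, Real.Angle.coe_two_pi, add_zero]
  · rfl

lemma angTo_add (u a b : ℂ) (hu : u ≠ 0) (ha : a ≠ 0) (hb : b ≠ 0) :
    ∃ k : ℤ, angTo true u b = angTo true u a + angTo true a b + 2 * Real.pi * k := by
  have hd : b / u = (a / u) * (b / a) := by field_simp
  have h := Complex.arg_mul_coe_angle (div_ne_zero ha hu) (div_ne_zero hb ha)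
  rw [← hd] at h
  have h2 : (angTo true u b : Real.Angle) =
      ((angTo true u a + angTo true a b : ℝ) : Real.Angle) := by
    rw [angTo_coe, h, Real.Angle.coe_add, angTo_coe, angTo_coe]
  rw [Real.Angle.angle_eq_iff_two_pi_dvd_sub] at h2
  obtain ⟨k, hk⟩ := h2
  exact ⟨k, by linarith⟩

lemma im_div_sign (w w' : ℂ) (hw : w ≠ 0) :
    (w' / w).im = cross w w' / Complex.normSq w := by
  rw [Complex.div_im, cross]
  have : Complex.normSq w ≠ 0 := ne_of_gt (Complex.normSq_pos.2 hw)
  field_simp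

-- positive cross gives arg in (0,π)
lemma arg_mem_of_cross (w w' : ℂ) (hw : w ≠ 0) (h : 0 < cross w w') :
    (w' / w).arg ∈ Set.Ioo 0 Real.pi := by
  have him : 0 < (w' / w).im := by
    rw [im_div_sign w w' hw]
    exact div_pos h (Complex.normSq_pos.2 hw)
  constructor
  · rcases lt_or_eq_of_le (Complex.arg_nonneg_iff.2 him.le) with h' | h'
    · exact h'
    · exfalso
      have := Complex.arg_eq_zero_iff.1 h'.symm
      linarith [this.2]
  · rcases lt_or_eq_of_le (Complex.arg_le_pi (w' / w)) with h' | h'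
    · exact h'
    · exfalso
      have := Complex.arg_eq_pi_iff.1 h'
      linarith [this.2]

lemma angTo_of_cross (w w' : ℂ) (hw : w ≠ 0) (h : 0 < cross w w') :
    angTo true w w' = (w' / w).arg ∧ angTo true w w' ∈ Set.Ioo 0 Real.pi := by
  have hm := arg_mem_of_cross w w' hw h
  have : angTo true w w' = (w' / w).arg := by
    rw [angTo_true_def, if_neg (by linarith [hm.1])]
  exact ⟨this, this ▸ hm⟩

-- angTo true > π implies cross < 0  (stated contrapositively as needed)
lemma cross_neg_of_angTo_gt (w w' : ℂ) (hw : w ≠ 0) (h : Real.pi < angTo true w w') :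
    cross w w' < 0 := by
  have harg : (w' / w).arg < 0 := by
    by_contra h'
    rw [angTo_true_def, if_neg (by linarith)] at h
    linarith [Complex.arg_le_pi (w' / w)]
  have him : (w' / w).im < 0 := by
    by_contra h'
    exact absurd (Complex.arg_nonneg_iff.2 (le_of_not_gt h')) (by linarith)
  rw [im_div_sign w w' hw] at him
  by_contra h'
  have : 0 ≤ cross w w' / Complex.normSq w :=
    div_nonneg (not_lt.mp h') (Complex.normSq_nonneg w)
  linarith

lemma cross_nonneg_of_angTo_lt (w w' : ℂ) (hw : w ≠ 0) (h : angTo true w w' < Real.pi) :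
    0 ≤ cross w w' := by
  have harg : 0 ≤ (w' / w).arg := by
    by_contra h'
    rw [angTo_true_def, if_pos (lt_of_not_ge h')] at h
    linarith [Complex.neg_pi_lt_arg (w' / w)]
  have him : 0 ≤ (w' / w).im := Complex.arg_nonneg_iff.1 harg
  rw [im_div_sign w w' hw] at him
  have hn : 0 < Complex.normSq w := Complex.normSq_pos.2 hw
  by_contra h'
  have : cross w w' / Complex.normSq w < 0 := div_neg_of_neg_of_pos (lt_of_not_ge h') hn
  linarith

-- conjugation
lemma angTo_false_conj (w w' : ℂ) :
    angTo false w w' = - angTo true ((starRingEnd ℂ) w) ((starRingEnd ℂ) w') := by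
  have hd : (starRingEnd ℂ) w' / (starRingEnd ℂ) w = (starRingEnd ℂ) (w' / w) :=
    (map_div₀ _ _ _).symm
  rw [angTo_false_def, angTo_true_def, hd, Complex.arg_conj]
  have h1 := Complex.neg_pi_lt_arg (w' / w)
  have h2 := Complex.arg_le_pi (w' / w)
  have hπ := Real.pi_pos
  split_ifs with ha hb hc hb hc <;> linarith

-- negation of the ratio, when cross > 0
lemma angTo_false_neg_ratio (w w' : ℂ) (hw : w ≠ 0) (h : 0 < cross w w')
    (u u' : ℂ) (hr : u' / u = -(w' / w)) :
    angTo false u u' = angTo true w w' - Real.pi := by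
  have hm := arg_mem_of_cross w w' hw h
  have him : 0 < (w' / w).im := by
    rw [im_div_sign w w' hw]; exact div_pos h (Complex.normSq_pos.2 hw)
  have harg : (-(w' / w)).arg = (w' / w).arg - Real.pi :=
    Complex.arg_neg_eq_arg_sub_pi_of_im_pos him
  have hπ := Real.pi_pos
  rw [angTo_false_def, hr, harg, if_neg (by push_neg; linarith [hm.2]),
    angTo_true_def, if_neg (by linarith [hm.1])]

lemma cross_antisymm (a b : ℂ) : cross a b = - cross b a := by simp [cross]; ring

lemma cast_ne_cast {nn : ℕ} {a b : ℕ} (ha : a < nn) (hb : b < nn) (h : a ≠ b) :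
    (a : ZMod nn) ≠ (b : ZMod nn) := by
  intro he
  apply h
  have := congrArg ZMod.val he
  rwa [ZMod.val_cast_of_lt ha, ZMod.val_cast_of_lt hb] at this

lemma k_pin (k l : ℤ) (h1 : 2 * Real.pi * (l : ℝ) < 2 * Real.pi * (k : ℝ))
    (h2 : 2 * Real.pi * (k : ℝ) < 2 * Real.pi * ((l : ℝ) + 2)) : k = l + 1 := by
  have hπ : (0:ℝ) < 2 * Real.pi := by positivity
  have hl : (l : ℝ) < (k : ℝ) := lt_of_mul_lt_mul_left h1 hπ.le
  have hr : (k : ℝ) < (l : ℝ) + 2 := lt_of_mul_lt_mul_left h2 hπ.le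
  have hl' : l < k := by exact_mod_cast hl
  have hr2 : ((k : ℤ) : ℝ) < (((l + 2 : ℤ)) : ℝ) := by push_cast; linarith
  have hr' : k < l + 2 := by exact_mod_cast hr2
  omega

lemma sum_range_zmod {nn : ℕ} [NeZero nn] (f : ZMod nn → ℝ) :
    ∑ i : ZMod nn, f i = ∑ m ∈ Finset.range nn, f (m : ZMod nn) := by
  rw [← Fin.sum_univ_eq_sum_range]
  refine (Fintype.sum_bijective (fun m : Fin nn => ((m : ℕ) : ZMod nn)) ?_ _ _ (fun m => rfl)).symm
  rw [Fintype.bijective_iff_injective_and_card]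
  refine ⟨?_, by simp [ZMod.card]⟩
  intro x y hxy
  have := congrArg ZMod.val hxy
  rw [ZMod.val_cast_of_lt x.isLt, ZMod.val_cast_of_lt y.isLt] at this
  exact Fin.ext this

lemma core {nn : ℕ} [NeZero nn] (hn : 3 ≤ nn) (P : ZMod nn → ℂ)
    (hc : ∀ i j, j ≠ i → j ≠ i + 1 → 0 < cross (P (i + 1) - P i) (P j - P i)) :
    (∀ i : ZMod nn, 0 < cross (P (i+1) - P i) (P (i+1+1) - P (i+1))) ∧
    (∀ i : ZMod nn, angTo true (P (i+1) - P i) (P (i+1+1) - P (i+1)) ∈ Set.Ioo 0 Real.pi) ∧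
    ∑ i : ZMod nn, angTo true (P (i+1) - P i) (P (i+1+1) - P (i+1)) = 2 * Real.pi := by
  set w : ZMod nn → ℂ := fun i => P (i + 1) - P i with hw
  -- claim A
  have claimA : ∀ i : ZMod nn, 0 < cross (w i) (w (i + 1)) := by
    intro i
    have h2 : i + 2 ≠ i := by
      intro h
      have : (2 : ZMod nn) = 0 := by
        have := add_left_cancel (a := i) (b := 2) (c := 0) (by rw [add_zero]; exact h)
        exact this
      have h2' : ((2 : ℕ) : ZMod nn) ≠ ((0 : ℕ) : ZMod nn) :=
        cast_ne_cast (by omega) (by omega) (by omega)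
      apply h2'
      push_cast
      exact this
    have h1 : i + 2 ≠ i + 1 := by
      intro h
      have h1' : ((2 : ℕ) : ZMod nn) ≠ ((1 : ℕ) : ZMod nn) :=
        cast_ne_cast (by omega) (by omega) (by omega)
      apply h1'
      push_cast
      exact add_left_cancel h
    have hcc := hc i (i + 2) h2 h1
    have e2 : P (i + 2) - P i = w (i + 1) + w i := by
      have : i + 1 + 1 = i + 2 := by ring
      simp only [hw, this]
      ring
    rw [e2] at hcc
    have : cross (w i) (w (i + 1) + w i) = cross (w i) (w (i + 1)) := by
      simp [cross]; ring
    rwa [this] at hcc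
  have wne : ∀ i : ZMod nn, w i ≠ 0 := by
    intro i h
    have := claimA i
    rw [h] at this
    simp [cross] at this
  -- natural-number indexed versions
  set W : ℕ → ℂ := fun m => w ((m : ℕ) : ZMod nn) with hW
  have Wsucc : ∀ m : ℕ, W (m + 1) = w (((m : ℕ) : ZMod nn) + 1) := by
    intro m; simp only [hW, Nat.cast_add, Nat.cast_one]
  have Wne : ∀ m, W m ≠ 0 := fun m => wne _
  have crossW : ∀ m : ℕ, 0 < cross (W m) (W (m + 1)) := by
    intro m; rw [Wsucc]; exact claimA _
  have hδ : ∀ m : ℕ, angTo true (W m) (W (m + 1)) ∈ Set.Ioo 0 Real.pi := by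
    intro m; exact (angTo_of_cross _ _ (Wne m) (crossW m)).2
  have hπ := Real.pi_pos
  -- the key induction
  have key : ∀ j : ℕ, 1 ≤ j → j ≤ nn - 1 →
      angTo true (W 0) (W j) = ∑ m ∈ Finset.range j, angTo true (W m) (W (m + 1)) := by
    intro j
    induction j with
    | zero => omega
    | succ j ih =>
      intro _ hj1
      rcases Nat.eq_zero_or_pos j with hj0 | hjpos
      · subst hj0
        simp
      · have hjle : j ≤ nn - 1 := by omega
        have ha := ih hjpos hjle
        have hamem := angTo_mem_Ico (W 0) (W j)
        have hdmem := hδ j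
        have htmem := angTo_mem_Ico (W 0) (W (j + 1))
        obtain ⟨k, hk⟩ := angTo_add (W 0) (W j) (W (j + 1)) (Wne 0) (Wne j) (Wne (j + 1))
        by_cases hlt : angTo true (W 0) (W j) + angTo true (W j) (W (j + 1)) < 2 * Real.pi
        · have hk0 : k = 0 := by
            have := k_pin k (-1) (by push_cast; nlinarith [htmem.1, htmem.2, hamem.1, hdmem.1])
              (by push_cast; nlinarith [htmem.2, hamem.1, hdmem.1])
            omega
          rw [hk0] at hk
          push_cast at hk
          rw [Finset.sum_range_succ, ← ha]
          linarith [hk]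
        · exfalso
          push_neg at hlt
          have hkm1 : k = -1 := by
            have := k_pin k (-2)
              (by push_cast; nlinarith [htmem.1, hamem.2, hdmem.2])
              (by push_cast; nlinarith [htmem.2, hlt])
            omega
          rw [hkm1] at hk
          push_cast at hk
          have hapi : Real.pi < angTo true (W 0) (W j) := by linarith [htmem.1, hdmem.2]
          -- j ≥ 2
          have hj2 : 2 ≤ j := by
            by_contra hcon
            push_neg at hcon
            have hj1' : j = 1 := by omega
            subst hj1'
            have h10 := hδ 0
            norm_num at h10
            linarith [h10.2]
          have hjnn : j + 1 ≤ nn - 1 := hj1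
          -- six hypotheses of nowrap
          have h1 : 0 < cross (W j) (W 0) := by
            have hcn := cross_neg_of_angTo_gt (W 0) (W j) (Wne 0) hapi
            have hac := cross_antisymm (W j) (W 0)
            linarith
          have h2 : 0 ≤ cross (W 0) (W (j + 1)) := by
            apply cross_nonneg_of_angTo_lt (W 0) (W (j + 1)) (Wne 0)
            linarith [hamem.2, hdmem.2]
          have h3 : 0 < cross (W j) (W (j + 1)) := crossW j
          -- index distinctness facts
          have hv1j : (1 : ZMod nn) ≠ ((j : ℕ) : ZMod nn) := by
            have := cast_ne_cast (nn := nn) (a := 1) (b := j) (by omega) (by omega) (by omega)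
            simpa using this
          have hcast1 : (((j : ℕ) : ZMod nn) + 1) = (((j + 1 : ℕ)) : ZMod nn) := by push_cast; ring
          have hv1j1 : (1 : ZMod nn) ≠ ((j : ℕ) : ZMod nn) + 1 := by
            rw [hcast1]
            have := cast_ne_cast (nn := nn) (a := 1) (b := j + 1) (by omega) (by omega) (by omega)
            simpa using this
          have h4 : 0 < cross (W j) (P 1 - P ((j : ℕ) : ZMod nn)) := hc _ 1 hv1j hv1j1
          have hcast2 : (((j + 1 : ℕ) : ZMod nn) + 1) = (((j + 2 : ℕ)) : ZMod nn) := by push_cast; ring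
          have hv2 : (1 : ZMod nn) ≠ ((j + 1 : ℕ) : ZMod nn) := by
            have := cast_ne_cast (nn := nn) (a := 1) (b := j + 1) (by omega) (by omega) (by omega)
            simpa using this
          have hv3 : (1 : ZMod nn) ≠ ((j + 1 : ℕ) : ZMod nn) + 1 := by
            rw [hcast2]
            rcases Nat.lt_or_ge (j + 2) nn with h | h
            · have := cast_ne_cast (nn := nn) (a := 1) (b := j + 2) (by omega) h (by omega)
              simpa using this
            · have hj2nn : j + 2 = nn := by omega
              rw [hj2nn, ZMod.natCast_self]
              have := cast_ne_cast (nn := nn) (a := 1) (b := 0) (by omega) (by omega) (by omega)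
              simpa using this
          have h5' := hc (((j + 1 : ℕ)) : ZMod nn) 1 hv2 hv3
          have h5 : 0 < cross (W (j + 1)) ((P 1 - P ((j : ℕ) : ZMod nn)) - W j) := by
            have e : (P 1 - P ((j : ℕ) : ZMod nn)) - W j
                = P 1 - P (((j + 1 : ℕ)) : ZMod nn) := by
              simp only [hW, hw, hcast1]
              ring
            rw [e]
            have eW : W (j + 1) = P ((((j + 1 : ℕ)) : ZMod nn) + 1) - P (((j + 1 : ℕ)) : ZMod nn) := by
              rw [Wsucc]
              simp only [hw, hcast1]
            rw [eW]
            exact h5'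
          have hv4 : (((j + 1 : ℕ)) : ZMod nn) ≠ 0 := by
            have := cast_ne_cast (nn := nn) (a := j + 1) (b := 0) (by omega) (by omega) (by omega)
            simpa using this
          have hv5 : (((j + 1 : ℕ)) : ZMod nn) ≠ 0 + 1 := by
            rw [zero_add]
            have := cast_ne_cast (nn := nn) (a := j + 1) (b := 1) (by omega) (by omega) (by omega)
            simpa using this
          have h6' := hc 0 (((j + 1 : ℕ)) : ZMod nn) hv4 hv5
          have h6 : 0 < cross (W 0) (W j - (P 1 - P ((j : ℕ) : ZMod nn))) := by
            have e : W j - (P 1 - P ((j : ℕ) : ZMod nn))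
                = (P (((j + 1 : ℕ)) : ZMod nn) - P 0) - (P ((0 : ZMod nn) + 1) - P 0)
                  + (P ((0 : ZMod nn) + 1) - P 1) := by
              simp only [hW, hw, hcast1]
              ring
            have e01 : ((0 : ZMod nn) + 1) = 1 := by rw [zero_add]
            have hW0 : W 0 = P ((0 : ZMod nn) + 1) - P 0 := by
              simp only [hW, hw, Nat.cast_zero]
            have hcr : cross (W 0) (W j - (P 1 - P ((j : ℕ) : ZMod nn)))
                = cross (W 0) (P (((j + 1 : ℕ)) : ZMod nn) - P 0)
                  - cross (W 0) (W 0) := by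
              rw [e, e01]
              rw [hW0, e01]
              simp [cross]
              ring
            rw [hcr]
            have : cross (W 0) (W 0) = 0 := by simp [cross]; ring
            rw [this, sub_zero]
            have eW0 : W 0 = P ((0:ZMod nn) + 1) - P 0 := hW0
            rw [eW0]
            exact h6'
          exact nowrap (W 0) (W j) (W (j + 1)) (P 1 - P ((j : ℕ) : ZMod nn)) h1 h2 h3 h4 h5 h6
  -- conclude the total sum
  have hnn1 : nn - 1 + 1 = nn := by omega
  have hWnn : W nn = W 0 := by
    simp only [hW, ZMod.natCast_self, Nat.cast_zero]
  have hfin : angTo true (W 0) (W (nn - 1)) + angTo true (W (nn - 1)) (W nn) = 2 * Real.pi := by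
    obtain ⟨k, hk⟩ := angTo_add (W 0) (W (nn - 1)) (W nn) (Wne 0) (Wne (nn - 1)) (Wne nn)
    have hz : angTo true (W 0) (W nn) = 0 := by
      rw [hWnn, angTo_true_def, div_self (Wne 0)]
      simp [Complex.arg_one]
    rw [hz] at hk
    have hamem := angTo_mem_Ico (W 0) (W (nn - 1))
    have hdmem : angTo true (W (nn - 1)) (W nn) ∈ Set.Ioo 0 Real.pi := by
      have := hδ (nn - 1)
      rwa [hnn1] at this
    have hkm1 : k = -1 := by
      have := k_pin k (-2)
        (by push_cast; nlinarith [hamem.2, hdmem.2])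
        (by push_cast; nlinarith [hamem.1, hdmem.1])
      omega
    rw [hkm1] at hk
    push_cast at hk
    linarith
  have hsum : ∑ m ∈ Finset.range nn, angTo true (W m) (W (m + 1)) = 2 * Real.pi := by
    have : ∑ m ∈ Finset.range nn, angTo true (W m) (W (m + 1))
        = ∑ m ∈ Finset.range (nn - 1), angTo true (W m) (W (m + 1))
          + angTo true (W (nn - 1)) (W (nn - 1 + 1)) := by
      conv_lhs => rw [← hnn1]
      rw [Finset.sum_range_succ]
    rw [this, hnn1, ← key (nn - 1) (by omega) le_rfl]
    exact hfin
  refine ⟨?_, ?_, ?_⟩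
  · intro i
    have := claimA i
    simpa [hw] using this
  · intro i
    have := hδ 0
    -- general i: use angTo_of_cross directly
    have hci := claimA i
    have := (angTo_of_cross _ _ (wne i) hci).2
    simpa [hw] using this
  · rw [sum_range_zmod]
    rw [← hsum]
    apply Finset.sum_congr rfl
    intro m _
    rw [Wsucc m]

lemma cross_conj (a b : ℂ) :
    cross ((starRingEnd ℂ) a) ((starRingEnd ℂ) b) = - cross a b := by
  simp [cross]
  ring

lemma not_both (w w' : ℂ) (h1 : angTo true w w' ∈ Set.Ioo 0 Real.pi)
    (h2 : angTo false w w' ∈ Set.Ioo (-Real.pi) 0) : False := by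
  rw [angTo_true_def] at h1
  rw [angTo_false_def] at h2
  obtain ⟨h1a, h1b⟩ := h1
  obtain ⟨h2a, h2b⟩ := h2
  have hb1 := Complex.neg_pi_lt_arg (w' / w)
  have hb2 := Complex.arg_le_pi (w' / w)
  have := Real.pi_pos
  split_ifs at h1a h1b h2a h2b <;> linarith

lemma par_step {nn : ℕ} [NeZero nn] (h3 : 3 ≤ nn) (heven : Even nn) (i : ZMod nn) :
    Even ((i + 1).val) ↔ ¬ Even i.val := by
  have h2 : 2 ∣ nn := by
    obtain ⟨c, hc⟩ := heven
    subst hc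
    exact ⟨c, by ring⟩
  have hone : (1 : ZMod nn).val = 1 := by
    rw [ZMod.val_one_eq_one_mod]
    exact Nat.mod_eq_of_lt (by omega)
  have hval : (i + 1).val = (i.val + 1) % nn := by
    rw [ZMod.val_add, hone]
  rw [hval, Nat.even_iff, Nat.mod_mod_of_dvd _ h2, ← Nat.even_iff, Nat.even_add_one]

lemma alt_all {nn : ℕ} [NeZero nn] (h3 : 3 ≤ nn) (heven : Even nn) (w : ZMod nn → ℂ)
    (hcr : ∀ i, 0 < cross (w i) (w (i + 1))) (hne : ∀ i, w i ≠ 0) (i : ZMod nn) :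
    angTo false (if Even i.val then w i else -(w i))
      (if Even ((i + 1).val) then w (i + 1) else -(w (i + 1)))
      = angTo true (w i) (w (i + 1)) - Real.pi := by
  apply angTo_false_neg_ratio (w i) (w (i + 1)) (hne i) (hcr i)
  have hp := par_step h3 heven i
  by_cases h : Even i.val
  · rw [if_pos h, if_neg (by rw [hp]; exact not_not_intro h)]
    exact neg_div _ _
  · rw [if_neg h, if_pos (hp.mpr h)]
    exact div_neg _

lemma sum_pi_sub {nn : ℕ} [NeZero nn] (δ : ZMod nn → ℝ)
    (hsum : ∑ i : ZMod nn, δ i = 2 * Real.pi) :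
    ∑ i : ZMod nn, (Real.pi - δ i) = nn * Real.pi - 2 * Real.pi := by
  rw [Finset.sum_sub_distrib, hsum, Finset.sum_const, Finset.card_univ, ZMod.card,
    nsmul_eq_mul]

end Statement14Aux

/-- the edge vectors along the boundary of a convex polygon with `n`
vertices have winding number `1` w.r.t. the preferred orientation; if `n` is even,
the alternating sequence `(γ_1, -γ_2, …, γ_{n-1}, -γ_n)` is locally convex with the
opposite preferred orientation and has winding number `(n-2)/2`. -/
theorem statement14 (nn : ℕ) [NeZero nn] (hn : 3 ≤ nn)
    (P : ZMod nn → ℂ) (hconv : ConvexCyclic P) :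
    (∃ ε : Bool, Preferred (fun i => P (i + 1) - P i) ε ∧
      winding (fun i => P (i + 1) - P i) ε = 1) ∧
    (Even nn →
      ∀ ε : Bool, Preferred (fun i => P (i + 1) - P i) ε →
        LocallyConvex
          (fun i : ZMod nn => if Even i.val then P (i + 1) - P i else -(P (i + 1) - P i)) ∧
        Preferred
          (fun i : ZMod nn => if Even i.val then P (i + 1) - P i else -(P (i + 1) - P i)) (!ε) ∧
        winding
          (fun i : ZMod nn => if Even i.val then P (i + 1) - P i else -(P (i + 1) - P i)) (!ε) =
          ((nn : ℝ) - 2) / 2) := by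
  have hπ := Real.pi_pos
  have h2π : (2 * Real.pi) ≠ 0 := by positivity
  rcases hconv with hpos | hneg
  · -- positive orientation
    obtain ⟨hcr, hang, hsum⟩ := core hn P hpos
    have wne : ∀ i : ZMod nn, P (i + 1) - P i ≠ 0 := by
      intro i h
      have h' := hcr i
      rw [h] at h'
      simp [cross] at h'
    constructor
    · refine ⟨true, Or.inl ⟨rfl, fun i => hang i⟩, ?_⟩
      show (1 / (2 * Real.pi)) * (∑ i : ZMod nn,
        |angTo true (P (i + 1) - P i) (P (i + 1 + 1) - P (i + 1))|) = 1
      rw [Finset.sum_congr rfl (fun i _ => abs_of_pos (hang i).1), hsum]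
      field_simp
    · intro heven ε hpref
      have hε : ε = true := by
        cases ε with
        | true => rfl
        | false =>
          exfalso
          rcases hpref with ⟨hh, _⟩ | ⟨_, hall⟩
          · exact Bool.noConfusion hh
          · exact not_both _ _ (hang 0) (hall 0)
      subst hε
      have hstep := fun i => alt_all hn heven (fun i => P (i + 1) - P i) hcr wne i
      have habove : ∀ i : ZMod nn,
          angTo false (if Even i.val then P (i + 1) - P i else -(P (i + 1) - P i))
            (if Even ((i + 1).val) then P (i + 1 + 1) - P (i + 1)
              else -(P (i + 1 + 1) - P (i + 1)))
            ∈ Set.Ioo (-Real.pi) 0 := by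
        intro i
        rw [hstep i]
        exact ⟨by linarith [(hang i).1], by linarith [(hang i).2]⟩
      refine ⟨Or.inr habove, Or.inr ⟨rfl, habove⟩, ?_⟩
      show (1 / (2 * Real.pi)) * (∑ i : ZMod nn,
        |angTo false (if Even i.val then P (i + 1) - P i else -(P (i + 1) - P i))
          (if Even ((i + 1).val) then P (i + 1 + 1) - P (i + 1)
            else -(P (i + 1 + 1) - P (i + 1)))|) = ((nn : ℝ) - 2) / 2
      have hb : ∀ i : ZMod nn,
          |angTo false (if Even i.val then P (i + 1) - P i else -(P (i + 1) - P i))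
            (if Even ((i + 1).val) then P (i + 1 + 1) - P (i + 1)
              else -(P (i + 1 + 1) - P (i + 1)))|
          = Real.pi - angTo true (P (i + 1) - P i) (P (i + 1 + 1) - P (i + 1)) := by
        intro i
        rw [hstep i, abs_of_neg (by linarith [(hang i).2]), neg_sub]
      rw [Finset.sum_congr rfl (fun i _ => hb i), sum_pi_sub _ hsum]
      field_simp
  · -- negative orientation: conjugate
    have hQpos : ∀ i j, j ≠ i → j ≠ i + 1 →
        0 < cross ((fun i => (starRingEnd ℂ) (P i)) (i + 1) - (fun i => (starRingEnd ℂ) (P i)) i)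
          ((fun i => (starRingEnd ℂ) (P i)) j - (fun i => (starRingEnd ℂ) (P i)) i) := by
      intro i j hj hj1
      have h' := hneg i j hj hj1
      simp only []
      rw [show (starRingEnd ℂ) (P (i + 1)) - (starRingEnd ℂ) (P i)
          = (starRingEnd ℂ) (P (i + 1) - P i) from (map_sub _ _ _).symm,
        show (starRingEnd ℂ) (P j) - (starRingEnd ℂ) (P i)
          = (starRingEnd ℂ) (P j - P i) from (map_sub _ _ _).symm,
        cross_conj]
      linarith
    obtain ⟨hcrQ, hangQ, hsumQ⟩ := core hn (fun i => (starRingEnd ℂ) (P i)) hQpos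
    have eQ : ∀ i : ZMod nn, (starRingEnd ℂ) (P (i + 1)) - (starRingEnd ℂ) (P i)
        = (starRingEnd ℂ) (P (i + 1) - P i) := fun i => (map_sub _ _ _).symm
    have hangC : ∀ i : ZMod nn, angTo true ((starRingEnd ℂ) (P (i + 1) - P i))
        ((starRingEnd ℂ) (P (i + 1 + 1) - P (i + 1))) ∈ Set.Ioo 0 Real.pi := by
      intro i
      have := hangQ i
      rwa [eQ i, eQ (i + 1)] at this
    have hcrC : ∀ i : ZMod nn, 0 < cross ((starRingEnd ℂ) (P (i + 1) - P i))
        ((starRingEnd ℂ) (P (i + 1 + 1) - P (i + 1))) := by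
      intro i
      have := hcrQ i
      rwa [eQ i, eQ (i + 1)] at this
    have hsumC : ∑ i : ZMod nn, angTo true ((starRingEnd ℂ) (P (i + 1) - P i))
        ((starRingEnd ℂ) (P (i + 1 + 1) - P (i + 1))) = 2 * Real.pi := by
      rw [← hsumQ]
      apply Finset.sum_congr rfl
      intro i _
      rw [eQ i, eQ (i + 1)]
    have hrel : ∀ i : ZMod nn, angTo false (P (i + 1) - P i) (P (i + 1 + 1) - P (i + 1))
        = - angTo true ((starRingEnd ℂ) (P (i + 1) - P i))
            ((starRingEnd ℂ) (P (i + 1 + 1) - P (i + 1))) :=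
      fun i => angTo_false_conj _ _
    have hmemF : ∀ i : ZMod nn, angTo false (P (i + 1) - P i) (P (i + 1 + 1) - P (i + 1))
        ∈ Set.Ioo (-Real.pi) 0 := by
      intro i
      rw [hrel i]
      exact ⟨by linarith [(hangC i).2], by linarith [(hangC i).1]⟩
    constructor
    · refine ⟨false, Or.inr ⟨rfl, fun i => hmemF i⟩, ?_⟩
      show (1 / (2 * Real.pi)) * (∑ i : ZMod nn,
        |angTo false (P (i + 1) - P i) (P (i + 1 + 1) - P (i + 1))|) = 1
      rw [Finset.sum_congr rfl
        (fun i _ => by rw [hrel i, abs_neg, abs_of_pos (hangC i).1]), hsumC]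
      field_simp
    · intro heven ε hpref
      have hε : ε = false := by
        cases ε with
        | false => rfl
        | true =>
          exfalso
          rcases hpref with ⟨_, hall⟩ | ⟨hh, _⟩
          · exact not_both _ _ (hall 0) (hmemF 0)
          · exact Bool.noConfusion hh
      subst hε
      have wneC : ∀ i : ZMod nn, (starRingEnd ℂ) (P (i + 1) - P i) ≠ 0 := by
        intro i h
        have := hcrC i
        rw [h] at this
        simp [cross] at this
      have hstepQ := fun i =>
        alt_all hn heven (fun i => (starRingEnd ℂ) (P (i + 1) - P i)) hcrC wneC i
      have hcu : ∀ i : ZMod nn,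
          (starRingEnd ℂ) (if Even i.val then (starRingEnd ℂ) (P (i + 1) - P i)
            else -((starRingEnd ℂ) (P (i + 1) - P i)))
          = (if Even i.val then P (i + 1) - P i else -(P (i + 1) - P i)) := by
        intro i
        by_cases h : Even i.val <;> simp [h, Complex.conj_conj]
      have hT : ∀ i : ZMod nn,
          angTo true (if Even i.val then P (i + 1) - P i else -(P (i + 1) - P i))
            (if Even ((i + 1).val) then P (i + 1 + 1) - P (i + 1)
              else -(P (i + 1 + 1) - P (i + 1)))
          = Real.pi - angTo true ((starRingEnd ℂ) (P (i + 1) - P i))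
              ((starRingEnd ℂ) (P (i + 1 + 1) - P (i + 1))) := by
        intro i
        have hconj := angTo_false_conj
          (if Even i.val then (starRingEnd ℂ) (P (i + 1) - P i)
            else -((starRingEnd ℂ) (P (i + 1) - P i)))
          (if Even ((i + 1).val) then (starRingEnd ℂ) (P (i + 1 + 1) - P (i + 1))
            else -((starRingEnd ℂ) (P (i + 1 + 1) - P (i + 1))))
        rw [hcu i, hcu (i + 1)] at hconj
        rw [hstepQ i] at hconj
        linarith [hconj]
      have hmemT : ∀ i : ZMod nn,
          angTo true (if Even i.val then P (i + 1) - P i else -(P (i + 1) - P i))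
            (if Even ((i + 1).val) then P (i + 1 + 1) - P (i + 1)
              else -(P (i + 1 + 1) - P (i + 1))) ∈ Set.Ioo 0 Real.pi := by
        intro i
        rw [hT i]
        exact ⟨by linarith [(hangC i).2], by linarith [(hangC i).1]⟩
      refine ⟨Or.inl hmemT, Or.inl ⟨rfl, hmemT⟩, ?_⟩
      show (1 / (2 * Real.pi)) * (∑ i : ZMod nn,
        |angTo true (if Even i.val then P (i + 1) - P i else -(P (i + 1) - P i))
          (if Even ((i + 1).val) then P (i + 1 + 1) - P (i + 1)
            else -(P (i + 1 + 1) - P (i + 1)))|) = ((nn : ℝ) - 2) / 2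
      have hb : ∀ i : ZMod nn,
          |angTo true (if Even i.val then P (i + 1) - P i else -(P (i + 1) - P i))
            (if Even ((i + 1).val) then P (i + 1 + 1) - P (i + 1)
              else -(P (i + 1 + 1) - P (i + 1)))|
          = Real.pi - angTo true ((starRingEnd ℂ) (P (i + 1) - P i))
              ((starRingEnd ℂ) (P (i + 1 + 1) - P (i + 1))) := by
        intro i
        rw [hT i, abs_of_pos (by linarith [(hangC i).2])]
      rw [Finset.sum_congr rfl (fun i _ => hb i), sum_pi_sub _ hsumC]
      field_simp


end GKMPaper
end

section
/- In the Section 7 setting, let Γ' be a signed GKM structure on the underlying graph of Γ which induces the same unsigned GKM graph as Γ, and suppose that for some index i the labels of the basic edges f_i and h_i in Γ' do not agree. Then: (i) for every i = 1,…,n the labels of f_i and h_i in Γ' do not agree; (ii) the tuple (k_1,…,k_n) associated to the signed fibration Γ → B satisfies k_i = ±1 for all i; and (iii) whenever k_i and k_{i+1} have the same sign, the labels of f_i and f_{i+1} in Γ' either both agree or both disagree with their labels in Γ. -/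
open Classical

namespace GKMPaper

/-! ### Auxiliary material for the proof of Statement 15 -/

lemma OrGraph.dst_rev' (G : OrGraph) (e : G.E) : G.dst (G.rev e) = G.src e := by
  have h := G.src_rev (G.rev e)
  rw [G.rev_rev] at h
  exact h.symm

lemma int_unit {x y : ℤ} (h : x * y = 1) : x = 1 ∨ x = -1 :=
  Int.isUnit_iff.mp (IsUnit.of_mul_eq_one y h)

lemma pm_eq {a b : Zm 2} (h : pm a = pm b) : a = b ∨ a = -b := Quotient.exact h

lemma smul_cancel {v : Zm 2} (hv : v ≠ 0) {c d : ℤ} (h : c • v = d • v) : c = d := by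
  have hex : ∃ i, v i ≠ 0 := by
    by_contra hc
    push_neg at hc
    exact hv (funext fun i => by simpa using hc i)
  obtain ⟨i, hi⟩ := hex
  have h2 := congrFun h i
  simp only [Pi.smul_apply, smul_eq_mul] at h2
  exact mul_right_cancel₀ hi h2

lemma three_complete (G : OrGraph) (hreg : G.Regular 3) (q : G.V)
    (a b c : G.E) (ha : G.src a = q) (hb : G.src b = q) (hc : G.src c = q)
    (hab : a ≠ b) (hac : a ≠ c) (hbc : b ≠ c)
    (x : G.E) (hx : G.src x = q) : x = a ∨ x = b ∨ x = c := by
  have hcard := hreg q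
  have h3 : ({⟨a, ha⟩, ⟨b, hb⟩, ⟨c, hc⟩} : Finset {e : G.E // G.src e = q}).card = 3 := by
    rw [Finset.card_insert_of_notMem, Finset.card_insert_of_notMem, Finset.card_singleton]
    · simp only [Finset.mem_singleton, Subtype.mk.injEq]
      exact hbc
    · simp only [Finset.mem_insert, Finset.mem_singleton, Subtype.mk.injEq]
      push_neg
      exact ⟨hab, hac⟩
  have huniv : ({⟨a, ha⟩, ⟨b, hb⟩, ⟨c, hc⟩} : Finset {e : G.E // G.src e = q}) = Finset.univ :=
    Finset.eq_univ_of_card _ (by rw [h3, hcard])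
  have hmem := Finset.mem_univ (⟨x, hx⟩ : {e : G.E // G.src e = q})
  rw [← huniv] at hmem
  simpa only [Finset.mem_insert, Finset.mem_singleton, Subtype.mk.injEq] using hmem

/-! Scalar extraction lemmas (coefficients w.r.t. a unimodular pair `u`, `w`). -/

lemma straight_w {u w : Zm 2} {p q c δ a b : ℤ}
    (hdet : u 0 * w 1 - u 1 * w 0 = 1 ∨ u 0 * w 1 - u 1 * w 0 = -1)
    (hδ : δ = 1 ∨ δ = -1) (ha : a ≠ 0)
    (h : q • w = p • w + c • (δ • (a • u - b • w))) : c = 0 := by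
  have h0 := congrFun h 0
  have h1 := congrFun h 1
  simp only [Pi.add_apply, Pi.smul_apply, Pi.sub_apply, smul_eq_mul] at h0 h1
  have hk : c * δ * a * (u 0 * w 1 - u 1 * w 0) = 0 := by
    linear_combination (w 0) * h1 - (w 1) * h0
  have hca : c * δ * a = 0 := by
    rcases hdet with hd | hd <;> rw [hd] at hk <;> linarith
  have hδne : δ ≠ 0 := by rcases hδ with h' | h' <;> rw [h'] <;> norm_num
  rcases mul_eq_zero.mp hca with h' | h'
  · rcases mul_eq_zero.mp h' with h'' | h''
    · exact h''
    · exact absurd h'' hδne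
  · exact absurd h' ha

lemma straight_u {u w : Zm 2} {p q c δ a b : ℤ}
    (hdet : u 0 * w 1 - u 1 * w 0 = 1 ∨ u 0 * w 1 - u 1 * w 0 = -1)
    (hδ : δ = 1 ∨ δ = -1) (hb : b ≠ 0)
    (h : -(q • u) = -(p • u) + c • (δ • (a • u - b • w))) : c = 0 := by
  have h0 := congrFun h 0
  have h1 := congrFun h 1
  simp only [Pi.add_apply, Pi.smul_apply, Pi.sub_apply, Pi.neg_apply, smul_eq_mul] at h0 h1
  have hk : c * δ * b * (u 0 * w 1 - u 1 * w 0) = 0 := by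
    linear_combination (u 0) * h1 - (u 1) * h0
  have hcb : c * δ * b = 0 := by
    rcases hdet with hd | hd <;> rw [hd] at hk <;> linarith
  have hδne : δ ≠ 0 := by rcases hδ with h' | h' <;> rw [h'] <;> norm_num
  rcases mul_eq_zero.mp hcb with h' | h'
  · rcases mul_eq_zero.mp h' with h'' | h''
    · exact h''
    · exact absurd h'' hδne
  · exact absurd h' hb

lemma twist_rel_1 {u w : Zm 2} {E1 E4 c δ a b : ℤ}
    (hdet : u 0 * w 1 - u 1 * w 0 = 1 ∨ u 0 * w 1 - u 1 * w 0 = -1)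
    (h : -(E4 • u) = E1 • w + c • (δ • (a • u - b • w))) :
    E4 = -(c * δ * a) ∧ E1 = c * δ * b := by
  have h0 := congrFun h 0
  have h1 := congrFun h 1
  simp only [Pi.add_apply, Pi.smul_apply, Pi.sub_apply, Pi.neg_apply, smul_eq_mul] at h0 h1
  have q1 : E4 * (u 0 * w 1 - u 1 * w 0) = -(c * δ * a) * (u 0 * w 1 - u 1 * w 0) := by
    linear_combination (w 0) * h1 - (w 1) * h0
  have q2 : E1 * (u 0 * w 1 - u 1 * w 0) = (c * δ * b) * (u 0 * w 1 - u 1 * w 0) := by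
    linear_combination (u 1) * h0 - (u 0) * h1
  rcases hdet with hd | hd <;> rw [hd] at q1 q2 <;> exact ⟨by linarith, by linarith⟩

lemma twist_rel_2 {u w : Zm 2} {E2 E3 c δ a b : ℤ}
    (hdet : u 0 * w 1 - u 1 * w 0 = 1 ∨ u 0 * w 1 - u 1 * w 0 = -1)
    (h : E3 • w = -(E2 • u) + c • (δ • (a • u - b • w))) :
    E2 = c * δ * a ∧ E3 = -(c * δ * b) := by
  have h0 := congrFun h 0
  have h1 := congrFun h 1
  simp only [Pi.add_apply, Pi.smul_apply, Pi.sub_apply, Pi.neg_apply, smul_eq_mul] at h0 h1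
  have q3 : E2 * (u 0 * w 1 - u 1 * w 0) = (c * δ * a) * (u 0 * w 1 - u 1 * w 0) := by
    linear_combination (w 1) * h0 - (w 0) * h1
  have q4 : E3 * (u 0 * w 1 - u 1 * w 0) = -(c * δ * b) * (u 0 * w 1 - u 1 * w 0) := by
    linear_combination (u 0) * h1 - (u 1) * h0
  rcases hdet with hd | hd <;> rw [hd] at q3 q4 <;> exact ⟨by linarith, by linarith⟩

lemma twist_arith {E1 E2 E3 E4 c1 c2 δ a b : ℤ}
    (hE1 : E1 = 1 ∨ E1 = -1) (hE4 : E4 = 1 ∨ E4 = -1) (hδ : δ = 1 ∨ δ = -1)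
    (r1 : E4 = -(c1 * δ * a)) (r2 : E1 = c1 * δ * b)
    (r3 : E2 = c2 * δ * a) (r4 : E3 = -(c2 * δ * b)) :
    (a = 1 ∨ a = -1) ∧ (b = 1 ∨ b = -1) ∧ E1 * E3 = E2 * E4 ∧
      (E1 * E3 = -1 → E1 * E2 = a * b) := by
  have sq : ∀ x : ℤ, (x = 1 ∨ x = -1) → x * x = 1 := by
    rintro x (h | h) <;> rw [h] <;> norm_num
  have hE1sq := sq E1 hE1
  have hE4sq := sq E4 hE4
  have ha1 : a * (a * (c1 * c1) * (δ * δ)) = 1 := by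
    linear_combination hE4sq + (c1 * δ * a - E4) * r1
  have hb1 : b * (b * (c1 * c1) * (δ * δ)) = 1 := by
    linear_combination hE1sq - (c1 * δ * b + E1) * r2
  have ha := int_unit ha1
  have hb := int_unit hb1
  have ha2 := sq a ha
  have hb2 := sq b hb
  refine ⟨ha, hb, ?_, ?_⟩
  · rw [r2, r4, r3, r1]
    linear_combination (c1 * c2 * δ * δ) * ha2 - (c1 * c2 * δ * δ) * hb2
  · intro h
    rw [r2, r4] at h
    rw [r2, r3]
    linear_combination (-(a * b)) * h - (a * b * c1 * c2 * δ * δ) * hb2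

section S15

variable (S : Section7) (α' : S.G.E → Zm 2)

/-- The sign comparing `α'` with `aG` on an edge. -/
noncomputable def eps (x : S.G.E) : ℤ := if α' x = S.aG x then 1 else -1

lemma eps_pm (x : S.G.E) : eps S α' x = 1 ∨ eps S α' x = -1 := by
  unfold eps; split_ifs <;> simp

lemma eps_spec (hsame : ∀ ed, pm (α' ed) = pm (S.aG ed)) (x : S.G.E) :
    α' x = eps S α' x • S.aG x := by
  unfold eps
  split_ifs with h
  · rw [one_smul]; exact h
  · rcases pm_eq (hsame x) with h' | h'
    · exact absurd h' h
    · rw [neg_smul, one_smul]; exact h'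

/-- The basic edge preceding `f m` in the cyclic order. -/
def bprev (m : ZMod S.n) : S.G.E := if m = 0 then S.h (-1) else S.f (m - 1)

/-- The basic edge preceding `h m` in the cyclic order. -/
def bprev' (m : ZMod S.n) : S.G.E := if m = 0 then S.f (-1) else S.h (m - 1)

lemma two_ne : (2 : ZMod S.n) ≠ 0 := by
  intro h
  have h2 : ((2 : ℕ) : ZMod S.n) = 0 := by exact_mod_cast h
  have hd : S.n ∣ 2 := (CharP.cast_eq_zero_iff (ZMod S.n) S.n 2).mp h2
  have h3 := Nat.le_of_dvd (by norm_num) hd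
  have := S.hn
  omega

lemma e_ne_rev (m : ZMod S.n) : S.e m ≠ S.B.rev (S.e (m - 1)) := by
  intro h
  have hd : S.B.dst (S.e m) = S.B.dst (S.B.rev (S.e (m - 1))) := by rw [← h]
  rw [S.dst_e, S.B.dst_rev', S.src_e] at hd
  have h2 : m + 1 = m - 1 := S.v_bij.injective hd
  exact two_ne S (by linear_combination h2)

lemma aG_horiz (x : S.G.E) (hx : ¬ S.π.Vertical x) : S.aG x = S.aB (S.π.onE x) := by
  obtain ⟨_, C', CB', _, _, h3⟩ := S.hfib
  exact h3.1 x hx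

lemma aG_f (i : ZMod S.n) : S.aG (S.f i) = S.aB (S.e i) := by
  rw [aG_horiz S _ (S.f_horiz i), S.f_over]

lemma aG_h (i : ZMod S.n) : S.aG (S.h i) = S.aB (S.e i) := by
  rw [aG_horiz S _ (S.h_horiz i), S.h_over]

lemma vert_rev (e : S.G.E) : S.π.Vertical (S.G.rev e) ↔ S.π.Vertical e := by
  unfold GraphFib.Vertical
  rw [S.G.src_rev, S.G.dst_rev']
  exact eq_comm

lemma bprev_horiz (m : ZMod S.n) : ¬ S.π.Vertical (bprev S m) := by
  unfold bprev; split_ifs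
  · exact S.h_horiz _
  · exact S.f_horiz _

lemma bprev'_horiz (m : ZMod S.n) : ¬ S.π.Vertical (bprev' S m) := by
  unfold bprev'; split_ifs
  · exact S.f_horiz _
  · exact S.h_horiz _

lemma onE_bprev (m : ZMod S.n) : S.π.onE (bprev S m) = S.e (m - 1) := by
  unfold bprev
  by_cases h0 : m = 0
  · rw [if_pos h0, S.h_over, h0, zero_sub]
  · rw [if_neg h0, S.f_over]

lemma onE_bprev' (m : ZMod S.n) : S.π.onE (bprev' S m) = S.e (m - 1) := by
  unfold bprev'
  by_cases h0 : m = 0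
  · rw [if_pos h0, S.f_over, h0, zero_sub]
  · rw [if_neg h0, S.h_over]

lemma aG_bprev (m : ZMod S.n) : S.aG (bprev S m) = S.aB (S.e (m - 1)) := by
  unfold bprev
  by_cases h0 : m = 0
  · rw [if_pos h0, aG_h, h0, zero_sub]
  · rw [if_neg h0, aG_f]

lemma aG_bprev' (m : ZMod S.n) : S.aG (bprev' S m) = S.aB (S.e (m - 1)) := by
  unfold bprev'
  by_cases h0 : m = 0
  · rw [if_pos h0, aG_f, h0, zero_sub]
  · rw [if_neg h0, aG_h]

lemma f_ne_g (m : ZMod S.n) : S.f m ≠ S.g m := by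
  intro h
  apply S.f_horiz m
  rw [h]
  exact S.g_vert m

lemma f_ne_revbp (m : ZMod S.n) : S.f m ≠ S.G.rev (bprev S m) := by
  intro hbad
  have h1 : S.e m = S.B.rev (S.e (m - 1)) := by
    have h2 := congrArg S.π.onE hbad
    rwa [S.f_over, S.π.rev_onE _ (bprev_horiz S m), onE_bprev] at h2
  exact e_ne_rev S m h1

lemma g_ne_revbp (m : ZMod S.n) : S.g m ≠ S.G.rev (bprev S m) := by
  intro h
  apply bprev_horiz S m
  apply (vert_rev S _).mp
  rw [← h]
  exact S.g_vert m

lemma h_ne_revg (m : ZMod S.n) : S.h m ≠ S.G.rev (S.g m) := by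
  intro h
  apply S.h_horiz m
  rw [h]
  exact (vert_rev S _).mpr (S.g_vert m)

lemma h_ne_revbp' (m : ZMod S.n) : S.h m ≠ S.G.rev (bprev' S m) := by
  intro hbad
  have h1 : S.e m = S.B.rev (S.e (m - 1)) := by
    have h2 := congrArg S.π.onE hbad
    rwa [S.h_over, S.π.rev_onE _ (bprev'_horiz S m), onE_bprev'] at h2
  exact e_ne_rev S m h1

lemma revg_ne_revbp' (m : ZMod S.n) : S.G.rev (S.g m) ≠ S.G.rev (bprev' S m) := by
  intro h
  have h2 : S.g m = bprev' S m := by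
    have h3 := congrArg S.G.rev h
    rwa [S.G.rev_rev, S.G.rev_rev] at h3
  apply bprev'_horiz S m
  rw [← h2]
  exact S.g_vert m

lemma src_bprev_rev (m : ZMod S.n) :
    S.G.src (S.G.rev (bprev S m)) = S.G.src (S.g m) := by
  rw [S.G.src_rev, S.g_src]
  unfold bprev
  by_cases h0 : m = 0
  · rw [if_pos h0, h0]
    exact S.twist_h
  · rw [if_neg h0]
    have hm : m - 1 + 1 = m := by ring
    have hne : m - 1 + 1 ≠ 0 := by rwa [hm]
    have hch := S.chain_f (m - 1) hne
    rwa [hm] at hch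

lemma src_bprev'_rev (m : ZMod S.n) :
    S.G.src (S.G.rev (bprev' S m)) = S.G.src (S.h m) := by
  rw [S.G.src_rev]
  unfold bprev'
  by_cases h0 : m = 0
  · rw [if_pos h0, h0]
    exact S.twist_f
  · rw [if_neg h0]
    have hm : m - 1 + 1 = m := by ring
    have hne : m - 1 + 1 ≠ 0 := by rwa [hm]
    have hch := S.chain_h (m - 1) hne
    rwa [hm] at hch

lemma aB_ne (j : ZMod S.n) : S.aB (S.e j) ≠ 0 := by
  intro h
  have hd := S.delzant (j + 1)
  have hj : j + 1 - 1 = j := by ring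
  rw [hj, h] at hd
  simp at hd

/-- The key local analysis at the fiber edge `g m`. -/
lemma key (hcompat : ∃ C : Connection S.G, SignedCompat S.G α' C)
    (hsame : ∀ ed, pm (α' ed) = pm (S.aG ed)) (m : ZMod S.n) :
    (α' (S.f m) = α' (S.h m) ∧ α' (bprev S m) = α' (bprev' S m)) ∨
    ((S.k m = 1 ∨ S.k m = -1) ∧ (S.k (m - 1) = 1 ∨ S.k (m - 1) = -1) ∧
      eps S α' (S.f m) * eps S α' (S.h m) = eps S α' (bprev S m) * eps S α' (bprev' S m) ∧
      (eps S α' (S.f m) * eps S α' (S.h m) = -1 →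
        eps S α' (S.f m) * eps S α' (bprev S m) =
          S.k m * (if m = 0 then -S.k (m - 1) else S.k (m - 1)))) := by
  obtain ⟨C, hCind, hCcong, hCrev⟩ := hcompat
  have hsf : S.G.src (S.f m) = S.G.src (S.g m) := (S.g_src m).symm
  have hsA : S.G.src (S.G.rev (bprev S m)) = S.G.src (S.g m) := src_bprev_rev S m
  have tinj : ∀ x y, S.G.src x = S.G.src (S.g m) → S.G.src y = S.G.src (S.g m) →
      C.t (S.g m) x = C.t (S.g m) y → x = y := by
    intro x y hx hy hxy
    have h1 := C.t_inv (S.g m) x hx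
    rw [hxy, C.t_inv (S.g m) y hy] at h1
    exact h1.symm
  have hsrc_rg : S.G.src (S.G.rev (S.g m)) = S.G.src (S.h m) := by
    rw [S.G.src_rev, S.g_dst]
  have hsrc_A' : S.G.src (S.G.rev (bprev' S m)) = S.G.src (S.h m) := src_bprev'_rev S m
  have hne1 : S.h m ≠ S.G.rev (S.g m) := h_ne_revg S m
  have hne2 : S.h m ≠ S.G.rev (bprev' S m) := h_ne_revbp' S m
  have hne3 : S.G.rev (S.g m) ≠ S.G.rev (bprev' S m) := revg_ne_revbp' S m
  have hT1src : S.G.src (C.t (S.g m) (S.f m)) = S.G.src (S.h m) := by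
    rw [C.src_t _ _ hsf, S.g_dst]
  have hT2src : S.G.src (C.t (S.g m) (S.G.rev (bprev S m))) = S.G.src (S.h m) := by
    rw [C.src_t _ _ hsA, S.g_dst]
  have h3c1 := three_complete S.G S.hG.1 (S.G.src (S.h m)) (S.h m) (S.G.rev (S.g m))
    (S.G.rev (bprev' S m)) rfl hsrc_rg hsrc_A' hne1 hne2 hne3 _ hT1src
  have h3c2 := three_complete S.G S.hG.1 (S.G.src (S.h m)) (S.h m) (S.G.rev (S.g m))
    (S.G.rev (bprev' S m)) rfl hsrc_rg hsrc_A' hne1 hne2 hne3 _ hT2src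
  have hT1ne : C.t (S.g m) (S.f m) ≠ S.G.rev (S.g m) := by
    intro hbad
    apply f_ne_g S m
    refine tinj _ _ hsf rfl ?_
    rw [C.t_self (S.g m)]
    exact hbad
  have hT2ne : C.t (S.g m) (S.G.rev (bprev S m)) ≠ S.G.rev (S.g m) := by
    intro hbad
    apply g_ne_revbp S m
    refine tinj _ _ rfl hsA ?_
    rw [C.t_self (S.g m)]
    exact hbad.symm
  have hT12 : C.t (S.g m) (S.f m) ≠ C.t (S.g m) (S.G.rev (bprev S m)) := by
    intro hbad
    exact f_ne_revbp S m (tinj _ _ hsf hsA hbad)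
  have hTT : (C.t (S.g m) (S.f m) = S.h m ∧
        C.t (S.g m) (S.G.rev (bprev S m)) = S.G.rev (bprev' S m)) ∨
      (C.t (S.g m) (S.f m) = S.G.rev (bprev' S m) ∧
        C.t (S.g m) (S.G.rev (bprev S m)) = S.h m) := by
    rcases h3c1 with h | h | h
    · rcases h3c2 with h' | h' | h'
      · exact absurd (h.trans h'.symm) hT12
      · exact absurd h' hT2ne
      · exact Or.inl ⟨h, h'⟩
    · exact absurd h hT1ne
    · rcases h3c2 with h' | h' | h'
      · exact Or.inr ⟨h, h'⟩
      · exact absurd h' hT2ne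
      · exact absurd (h.trans h'.symm) hT12
  obtain ⟨c1, hc1⟩ := hCcong (S.g m) (S.f m) hsf
  obtain ⟨c2, hc2⟩ := hCcong (S.g m) (S.G.rev (bprev S m)) hsA
  have hαf : α' (S.f m) = eps S α' (S.f m) • S.aB (S.e m) := by
    rw [eps_spec S α' hsame, aG_f]
  have hαh : α' (S.h m) = eps S α' (S.h m) • S.aB (S.e m) := by
    rw [eps_spec S α' hsame, aG_h]
  have hαA : α' (S.G.rev (bprev S m)) = -(eps S α' (bprev S m) • S.aB (S.e (m - 1))) := by
    rw [hCrev, eps_spec S α' hsame, aG_bprev]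
  have hαA' : α' (S.G.rev (bprev' S m)) = -(eps S α' (bprev' S m) • S.aB (S.e (m - 1))) := by
    rw [hCrev, eps_spec S α' hsame, aG_bprev']
  have hαg : α' (S.g m) = eps S α' (S.g m) •
      (S.k m • S.aB (S.e (m - 1)) - (if m = 0 then -S.k (m - 1) else S.k (m - 1)) • S.aB (S.e m)) := by
    rw [eps_spec S α' hsame, S.fiberweight]
  have hdet := S.delzant m
  have hδ := eps_pm S α' (S.g m)
  have hbne : (if m = 0 then -S.k (m - 1) else S.k (m - 1)) ≠ 0 := by
    split_ifs
    · exact neg_ne_zero.mpr (S.k_ne _)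
    · exact S.k_ne _
  rcases hTT with ⟨hT1, hT2⟩ | ⟨hT1, hT2⟩
  · -- straight case
    left
    rw [hT1] at hc1
    rw [hT2] at hc2
    have heq1 := hc1
    rw [hαh, hαf, hαg] at heq1
    have hc10 : c1 = 0 := straight_w hdet hδ (S.k_ne m) heq1
    have heq2 := hc2
    rw [hαA', hαA, hαg] at heq2
    have hc20 : c2 = 0 := straight_u hdet hδ hbne heq2
    rw [hc10, zero_smul, add_zero] at hc1
    rw [hc20, zero_smul, add_zero] at hc2
    refine ⟨hc1.symm, ?_⟩
    rw [hCrev, hCrev] at hc2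
    exact (neg_inj.mp hc2).symm
  · -- twist case
    right
    rw [hT1] at hc1
    rw [hT2] at hc2
    have heq1 := hc1
    rw [hαA', hαf, hαg] at heq1
    have heq2 := hc2
    rw [hαh, hαA, hαg] at heq2
    obtain ⟨r1, r2⟩ := twist_rel_1 hdet heq1
    obtain ⟨r3, r4⟩ := twist_rel_2 hdet heq2
    obtain ⟨hka, hkb, hpr, himp⟩ := twist_arith (eps_pm S α' (S.f m))
      (eps_pm S α' (bprev' S m)) hδ r1 r2 r3 r4
    refine ⟨hka, ?_, hpr, himp⟩
    by_cases h0 : m = 0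
    · rw [if_pos h0] at hkb
      rcases hkb with h | h
      · exact Or.inr (by omega)
      · exact Or.inl (by omega)
    · rwa [if_neg h0] at hkb

lemma dis_iff (hsame : ∀ ed, pm (α' ed) = pm (S.aG ed)) (j : ZMod S.n) :
    (α' (S.f j) ≠ α' (S.h j)) ↔ eps S α' (S.f j) * eps S α' (S.h j) = -1 := by
  have hw : S.aB (S.e j) ≠ 0 := aB_ne S j
  have h1 : α' (S.f j) = eps S α' (S.f j) • S.aB (S.e j) := by
    rw [eps_spec S α' hsame, aG_f]
  have h2 : α' (S.h j) = eps S α' (S.h j) • S.aB (S.e j) := by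
    rw [eps_spec S α' hsame, aG_h]
  constructor
  · intro hne
    have hd : eps S α' (S.f j) ≠ eps S α' (S.h j) := by
      intro he
      exact hne (by rw [h1, h2, he])
    rcases eps_pm S α' (S.f j) with ha | ha <;> rcases eps_pm S α' (S.h j) with hb | hb <;>
      rw [ha, hb] at hd ⊢ <;> first | (exact absurd rfl hd) | norm_num
  · intro hpr he
    have heq : eps S α' (S.f j) = eps S α' (S.h j) := by
      apply smul_cancel hw
      rw [← h1, ← h2]
      exact he
    rw [heq] at hpr
    rcases eps_pm S α' (S.h j) with h | h <;> rw [h] at hpr <;> norm_num at hpr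

lemma dis_step (hcompat : ∃ C : Connection S.G, SignedCompat S.G α' C)
    (hsame : ∀ ed, pm (α' ed) = pm (S.aG ed)) (m : ZMod S.n) :
    (α' (S.f m) ≠ α' (S.h m)) ↔ (α' (S.f (m - 1)) ≠ α' (S.h (m - 1))) := by
  have hk := key S α' hcompat hsame m
  have d1 := dis_iff S α' hsame m
  have d2 := dis_iff S α' hsame (m - 1)
  have hbp_pr : eps S α' (bprev S m) * eps S α' (bprev' S m) =
      eps S α' (S.f (m - 1)) * eps S α' (S.h (m - 1)) := by
    unfold bprev bprev'
    by_cases h0 : m = 0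
    · rw [if_pos h0, if_pos h0, h0, zero_sub]
      ring
    · rw [if_neg h0, if_neg h0]
  have hbp_eq : (α' (bprev S m) = α' (bprev' S m)) ↔
      (α' (S.f (m - 1)) = α' (S.h (m - 1))) := by
    unfold bprev bprev'
    by_cases h0 : m = 0
    · rw [if_pos h0, if_pos h0, h0, zero_sub]
      exact eq_comm
    · rw [if_neg h0, if_neg h0]
  constructor
  · intro hd
    rcases hk with ⟨hh1, _⟩ | ⟨_, _, hpr, _⟩
    · exact absurd hh1 hd
    · exact d2.mpr (by rw [← hbp_pr, ← hpr]; exact d1.mp hd)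
  · intro hd
    rcases hk with ⟨_, hh2⟩ | ⟨_, _, hpr, _⟩
    · exact absurd (hbp_eq.mp hh2) hd
    · exact d1.mpr (by rw [hpr, hbp_pr]; exact d2.mp hd)

end S15

/-- in the Section 7 setting, if a signed GKM structure `α'` inducing
the same unsigned GKM graph has disagreeing labels on `f i` and `h i` for some `i`,
then (i) the labels of `f i` and `h i` disagree for every `i`; (ii) all `k_i = ±1`;
(iii) whenever `k_i` and `k_{i+1}` have the same sign, the labels of `f i` and
`f (i+1)` in `α'` both agree or both disagree with those in `Γ`. -/
theorem statement15 (S : Section7) (α' : S.G.E → Zm 2)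
    (hcompat : ∃ C : Connection S.G, SignedCompat S.G α' C)
    (hsame : ∀ ed, pm (α' ed) = pm (S.aG ed))
    (hdis : ∃ i, α' (S.f i) ≠ α' (S.h i)) :
    (∀ i, α' (S.f i) ≠ α' (S.h i)) ∧
    (∀ i, S.k i = 1 ∨ S.k i = -1) ∧
    (∀ i : ZMod S.n, i + 1 ≠ 0 → 0 < S.k i * S.k (i + 1) →
      ((α' (S.f i) = S.aG (S.f i) ∧ α' (S.f (i + 1)) = S.aG (S.f (i + 1))) ∨
       (α' (S.f i) = - S.aG (S.f i) ∧ α' (S.f (i + 1)) = - S.aG (S.f (i + 1))))) := by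
  obtain ⟨i0, hi0⟩ := hdis
  have hstep : ∀ m : ZMod S.n, (α' (S.f m) ≠ α' (S.h m)) →
      (α' (S.f (m - 1)) ≠ α' (S.h (m - 1))) :=
    fun m => (dis_step S α' hcompat hsame m).mp
  have hdown : ∀ j : ℕ, α' (S.f (i0 - (j : ZMod S.n))) ≠ α' (S.h (i0 - (j : ZMod S.n))) := by
    intro j
    induction j with
    | zero => simpa using hi0
    | succ jj ih =>
      have hcast : ((jj + 1 : ℕ) : ZMod S.n) = ((jj : ℕ) : ZMod S.n) + 1 := by push_cast; ring
      rw [hcast, ← sub_sub]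
      exact hstep _ ih
  haveI : NeZero S.n := ⟨by have := S.hn; omega⟩
  have hall : ∀ m : ZMod S.n, α' (S.f m) ≠ α' (S.h m) := by
    intro m
    have h := hdown ((i0 - m).val)
    rwa [ZMod.natCast_rightInverse (i0 - m), sub_sub_cancel] at h
  refine ⟨hall, ?_, ?_⟩
  · intro i
    rcases key S α' hcompat hsame i with ⟨hh1, _⟩ | ⟨hk, _⟩
    · exact absurd hh1 (hall i)
    · exact hk
  · intro i hne hpos
    rcases key S α' hcompat hsame (i + 1) with ⟨hh1, _⟩ | ⟨_, _, _, himp⟩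
    · exact absurd hh1 (hall (i + 1))
    · have hd := (dis_iff S α' hsame (i + 1)).mp (hall (i + 1))
      have hE := himp hd
      have hcan : i + 1 - 1 = i := by ring
      rw [if_neg hne, hcan] at hE
      have hbp : bprev S (i + 1) = S.f i := by
        unfold bprev
        rw [if_neg hne, hcan]
      rw [hbp] at hE
      have he1 := eps_pm S α' (S.f i)
      have he2 := eps_pm S α' (S.f (i + 1))
      have hposE : 0 < S.k (i + 1) * S.k i := by
        rw [mul_comm]; exact hpos
      have heq : eps S α' (S.f i) = eps S α' (S.f (i + 1)) := by
        rcases he1 with h | h <;> rcases he2 with h' | h' <;> rw [h, h'] at hE ⊢ <;>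
          first | rfl | linarith
      have hs1 := eps_spec S α' hsame (S.f i)
      have hs2 := eps_spec S α' hsame (S.f (i + 1))
      rcases he1 with h | h
      · left
        constructor
        · rw [hs1, h, one_smul]
        · rw [hs2, ← heq, h, one_smul]
      · right
        constructor
        · rw [hs1, h, neg_smul, one_smul]
        · rw [hs2, ← heq, h, neg_smul, one_smul]

end GKMPaper
end
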